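/- If a nonnegative differentiable function Z satisfies Z'(t) ≤ (η - s(t)) Z(t) for all t ≥ t₀, where s is continuous and T-periodic with η < (1/T) ∫_{t₀}^{t₀+T} s(τ) dτ, and η - s is bounded above, then Z(t) → 0 as t → ∞. -/

import Mathlib

open Filter MeasureTheory intervalIntegral

theorem zooplankton_decay
    (T t₀ η M : ℝ) (hT : 0 < T) (s Z : ℝ → ℝ)
    (hs : Continuous s)
    (hper : ∀ t, s (t + T) = s t)
    (hη : η * T < ∫ τ in t₀..(t₀ + T), s τ)
    (hbdd : ∀ t, η - s t ≤ M)
    (hZdiff : Differentiable ℝ Z)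
    (hZnonneg : ∀ t, 0 ≤ Z t)
    (hZineq : ∀ t ≥ t₀, deriv Z t ≤ (η - s t) * Z t) :
    Tendsto Z atTop (nhds 0) := by
  set f : ℝ → ℝ := fun t => η - s t with hfdef
  have hfc : Continuous f := continuous_const.sub hs
  have hfint : ∀ a b : ℝ, IntervalIntegrable f volume a b := fun a b =>
    hfc.intervalIntegrable a b
  have hfper : Function.Periodic f T := fun t => by simp [hfdef, hper t]
  set g : ℝ → ℝ := fun t => ∫ τ in t₀..t, f τ with hgdef
  have hgderiv : ∀ t, HasDerivAt g (f t) t := fun t =>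
    intervalIntegral.integral_hasDerivAt_right (hfint _ _)
      (hfc.stronglyMeasurableAtFilter _ _) hfc.continuousAt
  set W : ℝ → ℝ := fun t => Z t * Real.exp (-(g t)) with hWdef
  have hWderiv : ∀ t, HasDerivAt W
      (deriv Z t * Real.exp (-(g t)) + Z t * (Real.exp (-(g t)) * (-(f t)))) t := by
    intro t
    exact (hZdiff t).hasDerivAt.mul ((hgderiv t).neg.exp)
  have hWanti : AntitoneOn W (Set.Ici t₀) := by
    apply antitoneOn_of_deriv_nonpos (convex_Ici t₀)
    · exact fun t _ => ((hWderiv t).continuousAt).continuousWithinAt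
    · exact fun t _ => ((hWderiv t).differentiableAt).differentiableWithinAt
    · intro t ht
      rw [interior_Ici] at ht
      rw [(hWderiv t).deriv]
      have hle := hZineq t (le_of_lt ht)
      have he : (0:ℝ) < Real.exp (-(g t)) := Real.exp_pos _
      have hft : f t = η - s t := rfl
      rw [hft]
      nlinarith [mul_le_mul_of_nonneg_right hle he.le, hZnonneg t]
  have hgt0 : g t₀ = 0 := by simp [hgdef]
  have hZbound : ∀ t ≥ t₀, Z t ≤ Z t₀ * Real.exp (g t) := by
    intro t ht
    have h1 : W t ≤ W t₀ := hWanti (Set.self_mem_Ici) ht ht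
    have h2 : W t₀ = Z t₀ := by simp [hWdef, hgt0]
    have h3 : Z t * Real.exp (-(g t)) ≤ Z t₀ := h2 ▸ h1
    have he : (0:ℝ) < Real.exp (g t) := Real.exp_pos _
    have := mul_le_mul_of_nonneg_right h3 he.le
    rwa [mul_assoc, ← Real.exp_add, neg_add_cancel, Real.exp_zero, mul_one] at this
  -- the periodic integral
  set I : ℝ := ∫ τ in t₀..(t₀ + T), s τ with hIdef
  have hper1 : (∫ τ in t₀..(t₀ + T), f τ) = η * T - I := by
    rw [hfdef]
    rw [intervalIntegral.integral_sub (intervalIntegrable_const) (hs.intervalIntegrable _ _)]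
    simp [mul_comm]
    exact hIdef.symm
  set δ : ℝ := I - η * T with hδdef
  have hδpos : 0 < δ := by simp [hδdef]; linarith
  set M' : ℝ := max M 0 with hM'def
  have hM'0 : 0 ≤ M' := le_max_right _ _
  have hgbd : ∀ t ≥ t₀, g t ≤ -(((t - t₀) / T - 1) * δ) + M' * T := by
    intro t ht
    set n : ℤ := ⌊(t - t₀) / T⌋ with hndef
    have hn0 : 0 ≤ n := Int.floor_nonneg.2 (div_nonneg (by linarith) hT.le)
    have hnle : (n : ℝ) ≤ (t - t₀) / T := Int.floor_le _
    have hnlt : (t - t₀) / T < n + 1 := Int.lt_floor_add_one _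
    have ha : t₀ + n • T ≤ t := by
      have := (mul_le_mul_of_nonneg_right hnle hT.le)
      rw [div_mul_cancel₀ _ hT.ne'] at this
      simpa [zsmul_eq_mul] using by linarith
    have hb : t ≤ t₀ + n • T + T := by
      have := (mul_le_mul_of_nonneg_right hnlt.le hT.le)
      rw [div_mul_cancel₀ _ hT.ne'] at this
      simpa [zsmul_eq_mul] using by nlinarith
    have hsplit : g t = (∫ τ in t₀..(t₀ + n • T), f τ) + ∫ τ in (t₀ + n • T)..t, f τ := by
      rw [hgdef]
      exact (intervalIntegral.integral_add_adjacent_intervals (hfint _ _) (hfint _ _)).symm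
    have hpart1 : (∫ τ in t₀..(t₀ + n • T), f τ) = -(n * δ) := by
      rw [hfper.intervalIntegral_add_zsmul_eq n t₀ hfint, hper1]
      rw [zsmul_eq_mul, hδdef]; ring
    have hpart2 : (∫ τ in (t₀ + n • T)..t, f τ) ≤ M' * T := by
      have hab : t₀ + n • T ≤ t := ha
      calc (∫ τ in (t₀ + n • T)..t, f τ)
          ≤ ∫ _ in (t₀ + n • T)..t, M' := by
            apply intervalIntegral.integral_mono_on hab (hfint _ _) intervalIntegrable_const
            intro x _
            exact (hbdd x).trans (le_max_left _ _)
        _ = (t - (t₀ + n • T)) * M' := by rw [intervalIntegral.integral_const]; simp [smul_eq_mul]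
        _ ≤ T * M' := by
            apply mul_le_mul_of_nonneg_right _ hM'0
            have := hb; linarith
        _ = M' * T := mul_comm _ _
    have hnge : (t - t₀) / T - 1 ≤ (n : ℝ) := by linarith
    have : -(n * δ) ≤ -(((t - t₀) / T - 1) * δ) := by
      have := mul_le_mul_of_nonneg_right hnge hδpos.le
      linarith
    rw [hsplit, hpart1]
    linarith [hpart2]
  -- g tends to -∞
  have hlin : Tendsto (fun t : ℝ => -(((t - t₀) / T - 1) * δ) + M' * T) atTop atBot := by
    apply tendsto_atBot_add_const_right
    apply Filter.tendsto_neg_atTop_atBot.comp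
    apply Tendsto.atTop_mul_const hδpos
    apply tendsto_atTop_add_const_right
    exact (tendsto_atTop_add_const_right _ _ tendsto_id).atTop_div_const hT
  have hgbot : Tendsto g atTop atBot := by
    apply tendsto_atBot_mono' atTop _ hlin
    filter_upwards [eventually_ge_atTop t₀] with t ht
    exact hgbd t ht
  have hexp : Tendsto (fun t => Z t₀ * Real.exp (g t)) atTop (nhds 0) := by
    have : Tendsto (fun t => Real.exp (g t)) atTop (nhds 0) :=
      Real.tendsto_exp_atBot.comp hgbot
    simpa using this.const_mul (Z t₀)
  apply squeeze_zero' (Eventually.of_forall hZnonneg) _ hexp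
  filter_upwards [eventually_ge_atTop t₀] with t ht
  exact hZbound t ht
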